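/- Let λ > 0 and let φ ∈ H_0^1∖{0} be an eigenfunction of T_ν with eigenvalue λ, i.e. ∫ f·φ dν = λ·∫ ∇f·∇φ dΛ for all f ∈ H_0^1. Then φ is affine on each connected component of [0,1]∖supp(ν) (Proposition 5.3). -/

import Mathlib

open MeasureTheory Filter
open scoped ENNReal

noncomputable section

/-- The topological support of a Borel measure on `ℝ`: the set of points all of whose
open neighbourhoods have positive measure. -/
def msupport (ν : Measure ℝ) : Set ℝ :=
  {x : ℝ | ∀ U : Set ℝ, IsOpen U → x ∈ U → 0 < ν U}

/-- `f ∈ H_0^1` with (weak) derivative `g ∈ L^2((0,1),Λ)`: on `[0,1]` one has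
`f x = f 0 + ∫_0^x g dΛ` with `f 0 = 0`, and `f 1 = 0`. -/
def IsH01 (f g : ℝ → ℝ) : Prop :=
  MemLp g 2 (volume.restrict (Set.Ioo 0 1)) ∧
    (∀ x ∈ Set.Icc (0 : ℝ) 1, f x = ∫ t in (0 : ℝ)..x, g t) ∧ f 1 = 0

/-- `f` is affine on each connected component of `[0,1] ∖ supp ν`. -/
def AffineOnComponents (ν : Measure ℝ) (f : ℝ → ℝ) : Prop :=
  ∀ x ∈ Set.Icc (0 : ℝ) 1 \ msupport ν, ∃ c d : ℝ,
    ∀ y ∈ connectedComponentIn (Set.Icc (0 : ℝ) 1 \ msupport ν) x, f y = c * y + d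

lemma null_of_compact (ν : Measure ℝ) (K : Set ℝ) (hK : IsCompact K)
    (h : ∀ x ∈ K, x ∉ msupport ν) : ν K = 0 := by
  have h' : ∀ x : K, ∃ U : Set ℝ, IsOpen U ∧ (x : ℝ) ∈ U ∧ ν U = 0 := by
    intro ⟨x, hx⟩
    have := h x hx
    simp only [msupport, Set.mem_setOf_eq] at this
    push_neg at this
    obtain ⟨U, hU, hxU, hνU⟩ := this
    exact ⟨U, hU, hxU, le_antisymm hνU (zero_le)⟩
  choose U hUo hxU hU0 using h'
  obtain ⟨t, ht⟩ := hK.elim_finite_subcover U hUo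
    (fun x hx => Set.mem_iUnion.mpr ⟨⟨x, hx⟩, hxU ⟨x, hx⟩⟩)
  refine le_antisymm ?_ (zero_le)
  calc ν K ≤ ν (⋃ i ∈ t, U i) := measure_mono ht
    _ = 0 := measure_biUnion_null_iff t.countable_toSet |>.mpr fun i _ => hU0 i

lemma ind_intble (p q c : ℝ) : Integrable ((Set.Ioo p q).indicator (fun _ => c)) volume := by
  rw [integrable_indicator_iff measurableSet_Ioo]
  exact integrableOn_const measure_Ioo_lt_top.ne

lemma intInd_zero {p q : ℝ} (c : ℝ) {x : ℝ} (hp : 0 ≤ p) (hx : x ≤ p) :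
    ∫ τ in (0:ℝ)..x, (Set.Ioo p q).indicator (fun _ => c) τ = 0 := by
  rcases le_or_gt 0 x with h0 | h0
  · rw [intervalIntegral.integral_of_le h0]
    refine setIntegral_eq_zero_of_forall_eq_zero fun τ hτ => ?_
    exact Set.indicator_of_notMem (fun hm => absurd hm.1 (not_lt.mpr (hτ.2.trans hx))) _
  · rw [intervalIntegral.integral_of_ge h0.le]
    rw [show (∫ τ in Set.Ioc x 0, (Set.Ioo p q).indicator (fun _ => c) τ) = 0 from ?_, neg_zero]
    refine setIntegral_eq_zero_of_forall_eq_zero fun τ hτ => ?_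
    exact Set.indicator_of_notMem (fun hm => absurd hm.1 (not_lt.mpr (hτ.2.trans hp))) _

lemma intInd_full {p q : ℝ} (c : ℝ) {x : ℝ} (hp : 0 ≤ p) (hpq : p ≤ q) (hx : q ≤ x) :
    ∫ τ in (0:ℝ)..x, (Set.Ioo p q).indicator (fun _ => c) τ = c * (q - p) := by
  have h0x : (0:ℝ) ≤ x := hp.trans (hpq.trans hx)
  rw [intervalIntegral.integral_of_le h0x, integral_indicator measurableSet_Ioo,
    Measure.restrict_restrict measurableSet_Ioo]
  have : Set.Ioo p q ∩ Set.Ioc 0 x = Set.Ioo p q :=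
    Set.inter_eq_self_of_subset_left fun τ hτ => ⟨hp.trans_lt hτ.1, hτ.2.le.trans hx⟩
  rw [this, setIntegral_const, Real.volume_real_Ioo_of_le (by linarith), smul_eq_mul,
    mul_comm]

lemma ident (ν : Measure ℝ) (φ gφ : ℝ → ℝ) (hφ : IsH01 φ gφ) (lam : ℝ) (hlam : 0 < lam)
    (heig : ∀ f gf : ℝ → ℝ, IsH01 f gf →
      ∫ x, f x * φ x ∂ν = lam * ∫ x in Set.Ioo (0 : ℝ) 1, gf x * gφ x)
    {s t u : ℝ} (h0s : 0 ≤ s) (hst : s < t) (htu : t < u) (hu1 : u ≤ 1)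
    (hnull : ν (Set.Ioo s u) = 0) :
    (u - t) * (φ t - φ s) = (t - s) * (φ u - φ t) := by
  haveI : IsFiniteMeasure (volume.restrict (Set.Ioo (0:ℝ) 1)) :=
    ⟨by rw [Measure.restrict_apply MeasurableSet.univ, Set.univ_inter]; exact measure_Ioo_lt_top⟩
  have hts : (0:ℝ) < t - s := by linarith
  have hut : (0:ℝ) < u - t := by linarith
  set gf : ℝ → ℝ := fun x => (Set.Ioo s t).indicator (fun _ => (t-s)⁻¹) x
      - (Set.Ioo t u).indicator (fun _ => (u-t)⁻¹) x with hgf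
  set f : ℝ → ℝ := fun x => ∫ τ in (0:ℝ)..x, gf τ with hf
  have hii1 : IntervalIntegrable ((Set.Ioo s t).indicator (fun _ => (t-s)⁻¹)) volume 0 1 :=
    (ind_intble s t _).intervalIntegrable
  have hii2 : IntervalIntegrable ((Set.Ioo t u).indicator (fun _ => (u-t)⁻¹)) volume 0 1 :=
    (ind_intble t u _).intervalIntegrable
  have hfval : ∀ x : ℝ, f x = (∫ τ in (0:ℝ)..x, (Set.Ioo s t).indicator (fun _ => (t-s)⁻¹) τ)
      - ∫ τ in (0:ℝ)..x, (Set.Ioo t u).indicator (fun _ => (u-t)⁻¹) τ := by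
    intro x
    exact intervalIntegral.integral_sub ((ind_intble s t _).intervalIntegrable)
      ((ind_intble t u _).intervalIntegrable)
  have hH : IsH01 f gf := by
    refine ⟨?_, fun x _ => rfl, ?_⟩
    · have m1 : MemLp ((Set.Ioo s t).indicator (fun _ => (t-s)⁻¹)) 2
          (volume.restrict (Set.Ioo (0:ℝ) 1)) :=
        memLp_indicator_const 2 measurableSet_Ioo _ (Or.inr (measure_ne_top _ _))
      have m2 : MemLp ((Set.Ioo t u).indicator (fun _ => (u-t)⁻¹)) 2
          (volume.restrict (Set.Ioo (0:ℝ) 1)) :=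
        memLp_indicator_const 2 measurableSet_Ioo _ (Or.inr (measure_ne_top _ _))
      exact m1.sub m2
    · rw [hfval 1, intInd_full _ h0s hst.le (htu.le.trans hu1),
        intInd_full _ (h0s.trans hst.le) htu.le hu1]
      field_simp
      norm_num
  -- f vanishes outside Ioo s u
  have hf0 : ∀ x : ℝ, x ∉ Set.Ioo s u → f x = 0 := by
    intro x hx
    rcases le_or_gt x s with h | h
    · rw [hfval x, intInd_zero _ h0s h, intInd_zero _ (h0s.trans hst.le) (h.trans hst.le),
        sub_zero]
    · have hux : u ≤ x := by
        by_contra hc; exact hx ⟨h, lt_of_not_ge hc⟩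
      rw [hfval x, intInd_full _ h0s hst.le (htu.le.trans hux),
        intInd_full _ (h0s.trans hst.le) htu.le hux]
      field_simp
      norm_num
  -- LHS is zero
  have hLHS : ∫ x, f x * φ x ∂ν = 0 := by
    refine integral_eq_zero_of_ae (ae_iff.mpr (measure_mono_null ?_ hnull))
    intro x hx
    by_contra hc
    exact hx (show f x * φ x = (0:ℝ→ℝ) x by simp [hf0 x hc])
  -- gφ integrable on (0,1)
  have hgφ_int : Integrable gφ (volume.restrict (Set.Ioo (0:ℝ) 1)) :=
    memLp_one_iff_integrable.mp (hφ.1.mono_exponent (by norm_num))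
  -- RHS computation
  have hsub1 : Set.Ioo s t ⊆ Set.Ioo (0:ℝ) 1 := fun x hx =>
    ⟨h0s.trans_lt hx.1, hx.2.trans (htu.trans_le hu1)⟩
  have hsub2 : Set.Ioo t u ⊆ Set.Ioo (0:ℝ) 1 := fun x hx =>
    ⟨(h0s.trans hst.le).trans_lt hx.1, hx.2.trans_le hu1⟩
  have hpt : ∀ x, gf x * gφ x = (Set.Ioo s t).indicator (fun y => (t-s)⁻¹ * gφ y) x
      - (Set.Ioo t u).indicator (fun y => (u-t)⁻¹ * gφ y) x := by
    intro x
    by_cases h1 : x ∈ Set.Ioo s t <;> by_cases h2 : x ∈ Set.Ioo t u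
    · exact absurd h2.1 (not_lt.mpr h1.2.le)
    all_goals simp [hgf, Set.indicator_of_mem, Set.indicator_of_notMem, h1, h2, sub_mul]
  have hint1 : Integrable ((Set.Ioo s t).indicator (fun y => (t-s)⁻¹ * gφ y))
      (volume.restrict (Set.Ioo (0:ℝ) 1)) :=
    (hgφ_int.const_mul _).indicator measurableSet_Ioo
  have hint2 : Integrable ((Set.Ioo t u).indicator (fun y => (u-t)⁻¹ * gφ y))
      (volume.restrict (Set.Ioo (0:ℝ) 1)) :=
    (hgφ_int.const_mul _).indicator measurableSet_Ioo
  have hRHS : ∫ x in Set.Ioo (0:ℝ) 1, gf x * gφ x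
      = (t-s)⁻¹ * (∫ x in Set.Ioo s t, gφ x) - (u-t)⁻¹ * ∫ x in Set.Ioo t u, gφ x := by
    rw [show (fun x => gf x * gφ x) = fun x =>
        (Set.Ioo s t).indicator (fun y => (t-s)⁻¹ * gφ y) x
        - (Set.Ioo t u).indicator (fun y => (u-t)⁻¹ * gφ y) x from funext hpt]
    rw [integral_sub hint1 hint2, integral_indicator measurableSet_Ioo,
      integral_indicator measurableSet_Ioo,
      Measure.restrict_restrict measurableSet_Ioo,
      Measure.restrict_restrict measurableSet_Ioo,
      Set.inter_eq_self_of_subset_left hsub1, Set.inter_eq_self_of_subset_left hsub2]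
    rw [integral_const_mul, integral_const_mul]
  -- interval integrability of gφ
  have hIOn : IntegrableOn gφ (Set.Ioo (0:ℝ) 1) volume := hgφ_int
  have hiiφ : ∀ {a : ℝ}, 0 ≤ a → a ≤ 1 → IntervalIntegrable gφ volume 0 a := by
    intro a h0 h1
    rw [intervalIntegrable_iff_integrableOn_Ioo_of_le h0]
    exact hIOn.mono_set (Set.Ioo_subset_Ioo le_rfl h1)
  have hφdiff : ∀ {a b : ℝ}, 0 ≤ a → a ≤ b → b ≤ 1 →
      φ b - φ a = ∫ x in Set.Ioo a b, gφ x := by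
    intro a b h0 hab h1
    rw [hφ.2.1 b ⟨h0.trans hab, h1⟩, hφ.2.1 a ⟨h0, hab.trans h1⟩,
      intervalIntegral.integral_interval_sub_left (hiiφ (h0.trans hab) h1) (hiiφ h0 (hab.trans h1)),
      intervalIntegral.integral_of_le hab, integral_Ioc_eq_integral_Ioo]
  have E := heig f gf hH
  rw [hLHS, hRHS, ← hφdiff h0s hst.le (htu.le.trans hu1),
    ← hφdiff (h0s.trans hst.le) htu.le hu1] at E
  have E2 : (t - s)⁻¹ * (φ t - φ s) - (u - t)⁻¹ * (φ u - φ t) = 0 :=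
    (mul_eq_zero.mp E.symm).resolve_left hlam.ne'
  have h1 : t - s ≠ 0 := hts.ne'
  have h2 : u - t ≠ 0 := hut.ne'
  field_simp at E2
  linarith [E2]

/-- **Proposition 5.3**: if `λ > 0` and `φ ∈ H_0^1 ∖ {0}` is an eigenfunction of
`T_ν` with eigenvalue `λ`, i.e. `∫ f·φ dν = λ ∫ ∇f·∇φ dΛ` for all `f ∈ H_0^1`, then
`φ` is affine on each connected component of `[0,1] ∖ supp ν`. -/
theorem statement14 (ν : Measure ℝ) [IsFiniteMeasure ν] (hν0 : ν ≠ 0)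
    (hνs : ν (Set.Ioo (0 : ℝ) 1)ᶜ = 0)
    (φ gφ : ℝ → ℝ) (hφ : IsH01 φ gφ)
    (hφne : ∃ x ∈ Set.Icc (0 : ℝ) 1, φ x ≠ 0) (lam : ℝ) (hlam : 0 < lam)
    (heig : ∀ f gf : ℝ → ℝ, IsH01 f gf →
      ∫ x, f x * φ x ∂ν = lam * ∫ x in Set.Ioo (0 : ℝ) 1, gf x * gφ x) :
    AffineOnComponents ν φ := by
  intro x hx
  set S := Set.Icc (0:ℝ) 1 \ msupport ν with hS
  set K := connectedComponentIn S x with hK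
  have hKS : K ⊆ S := connectedComponentIn_subset S x
  have hxK : x ∈ K := mem_connectedComponentIn hx
  have hKo : K.OrdConnected := (isPreconnected_connectedComponentIn).ordConnected
  have hnul : ∀ a b, a ∈ K → b ∈ K → ν (Set.Ioo a b) = 0 := by
    intro a b ha hb
    have h0 : ν (Set.Icc a b) = 0 :=
      null_of_compact ν _ isCompact_Icc (fun z hz => (hKS (hKo.out ha hb hz)).2)
    exact measure_mono_null Set.Ioo_subset_Icc_self h0
  have L : ∀ a r b, a ∈ K → b ∈ K → a < r → r < b →
      (b - r) * (φ r - φ a) = (r - a) * (φ b - φ r) := by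
    intro a r b ha hb har hrb
    exact ident ν φ gφ hφ lam hlam heig (hKS ha).1.1 har hrb (hKS hb).1.2 (hnul a b ha hb)
  by_cases hK2 : ∃ y ∈ K, y ≠ x
  · obtain ⟨y0, hy0K, hy0⟩ := hK2
    set p := min x y0 with hp
    set q := max x y0 with hq
    have hpK : p ∈ K := by
      rcases min_choice x y0 with h | h <;> rw [hp, h]
      exacts [hxK, hy0K]
    have hqK : q ∈ K := by
      rcases max_choice x y0 with h | h <;> rw [hq, h]
      exacts [hxK, hy0K]
    have hpq : p < q := min_lt_max.mpr hy0.symm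
    have hqp : q - p ≠ 0 := sub_ne_zero.mpr hpq.ne'
    refine ⟨(φ q - φ p)/(q-p), (q * φ p - p * φ q)/(q-p), fun y hyK => ?_⟩
    rcases lt_trichotomy y p with h1 | h1 | h1
    · have E := L y p q hyK hqK h1 hpq
      field_simp
      linear_combination -E
    · rw [h1]; field_simp; ring
    · rcases lt_trichotomy y q with h2 | h2 | h2
      · have E := L p y q hpK hqK h1 h2
        field_simp
        linear_combination E
      · rw [h2]; field_simp; ring
      · have E := L p q y hpK hyK hpq h2
        field_simp
        linear_combination -E
  · push_neg at hK2
    exact ⟨0, φ x, fun y hy => by rw [hK2 y hy]; ring⟩
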